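/- Chained mean oscillation estimate: Let Ω ⊂ ℝⁿ be a nozzle domain as above, and a < b reals. Then |P_{(a-1,a)}(φ) - P_{(b,b+1)}(φ)| ≤ C ∫_{Ω_{(a-1,b+1)}} |∇φ| dx for all φ ∈ W^{1,1}_loc(Ω), where C depends only on Ω (not on a, b, φ). -/

import Mathlib

open Set MeasureTheory Bornology
set_option maxHeartbeats 1000000

namespace Stmt10Aux

variable {n : ℕ}

lemma intOnProd {f : EuclideanSpace ℝ (Fin n) × ℝ → ℝ} (hf : Continuous f)
    {s : Set (EuclideanSpace ℝ (Fin n) × ℝ)} (hs : IsBounded s) :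
    IntegrableOn f s volume :=
  (hf.continuousOn.integrableOn_compact hs.isCompact_closure).mono_set subset_closure

lemma intOnR {f : ℝ → ℝ} (hf : Continuous f) (c d : ℝ) :
    IntegrableOn f (Ioo c d) volume :=
  (hf.continuousOn.integrableOn_compact isCompact_Icc).mono_set Ioo_subset_Icc_self

end Stmt10Aux

open Stmt10Aux

/-- Chained mean oscillation estimate (model case `Ω = D × ℝ`, `D ⊂ ℝ^{n-1}`
a bounded Lipschitz domain): there is a constant `C`, depending only on the
nozzle (not on `a`, `b`, `φ`), such that for all `a < b` and all `C¹`
functions `φ`,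
`|P_{(a-1,a)}(φ) - P_{(b,b+1)}(φ)| ≤ C ∫_{Ω_{(a-1,b+1)}} |∇φ| dx`,
where `P_{(s,t)}(φ)` is the average of `φ` over `D × (s,t)`. -/
theorem stmt_10 {n : ℕ} (D : Set (EuclideanSpace ℝ (Fin n)))
    (hDo : IsOpen D) (hDb : Bornology.IsBounded D) (hDne : D.Nonempty)
    (hDc : Convex ℝ D) :
    ∃ C : ℝ, 0 < C ∧ ∀ a b : ℝ, a < b →
      ∀ φ : EuclideanSpace ℝ (Fin n) × ℝ → ℝ, ContDiff ℝ 1 φ →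
      |(∫ x in D ×ˢ Ioo (a - 1) a, φ x) / (volume (D ×ˢ Ioo (a - 1) a)).toReal
        - (∫ x in D ×ˢ Ioo b (b + 1), φ x) /
            (volume (D ×ˢ Ioo b (b + 1))).toReal|
        ≤ C * ∫ x in D ×ˢ Ioo (a - 1) (b + 1), ‖fderiv ℝ φ x‖ := by
  have hμpos : 0 < volume D := hDo.measure_pos volume hDne
  have hμlt : volume D < ⊤ := hDb.measure_lt_top
  have hVpos : 0 < (volume D).toReal := ENNReal.toReal_pos hμpos.ne' hμlt.ne
  refine ⟨(volume D).toReal⁻¹, inv_pos.mpr hVpos, ?_⟩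
  intro a b hab φ hφ
  have hφc : Continuous φ := hφ.continuous
  have hfc : Continuous (fun x => fderiv ℝ φ x) := hφ.continuous_fderiv one_ne_zero
  have hgc : Continuous (fun x => ‖fderiv ℝ φ x‖) := hfc.norm
  have hbd : ∀ c d : ℝ, IsBounded (D ×ˢ Ioo c d) := fun c d =>
    hDb.prod (Metric.isBounded_Ioo c d)
  -- volumes of the two unit slabs
  have hvol : ∀ c : ℝ, volume (D ×ˢ Ioo c (c + 1)) = volume D := by
    intro c
    rw [show (volume : Measure (EuclideanSpace ℝ (Fin n) × ℝ)) = Measure.prod volume volume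
          from rfl,
      Measure.prod_prod, Real.volume_Ioo]
    norm_num
  have hvol1 : volume (D ×ˢ Ioo (a - 1) a) = volume D := by
    have := hvol (a - 1); rwa [show a - 1 + 1 = a by ring] at this
  have hvol2 : volume (D ×ˢ Ioo b (b + 1)) = volume D := hvol b
  -- iterated integral conversion
  have hprod : ∀ (c d : ℝ) (f : EuclideanSpace ℝ (Fin n) × ℝ → ℝ), Continuous f →
      ∫ x in D ×ˢ Ioo c d, f x = ∫ y in D, ∫ t in Ioo c d, f (y, t) := by
    intro c d f hf
    have h := intOnProd hf (hbd c d)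
    rw [show (volume : Measure (EuclideanSpace ℝ (Fin n) × ℝ)) = Measure.prod volume volume
        from rfl] at h ⊢
    exact setIntegral_prod f h
  -- integrability of inner integrals over D
  have hinner : ∀ (c d : ℝ) (f : EuclideanSpace ℝ (Fin n) × ℝ → ℝ), Continuous f →
      IntegrableOn (fun y => ∫ t in Ioo c d, f (y, t)) D := by
    intro c d f hf
    have h := intOnProd hf (hbd c d)
    rw [IntegrableOn,
      show (volume : Measure (EuclideanSpace ℝ (Fin n) × ℝ)) = Measure.prod volume volume
        from rfl, ← Measure.prod_restrict] at h
    exact h.integral_prod_left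
  set G : EuclideanSpace ℝ (Fin n) → ℝ :=
    fun y => ∫ r in Ioo (a - 1) (b + 1), ‖fderiv ℝ φ (y, r)‖ with hG
  -- key pointwise (in y) estimate
  have key : ∀ y : EuclideanSpace ℝ (Fin n),
      |(∫ s in Ioo (a - 1) a, φ (y, s)) - ∫ t in Ioo b (b + 1), φ (y, t)| ≤ G y := by
    intro y
    have hc1 : Continuous fun s : ℝ => φ (y, s) :=
      hφc.comp (continuous_const.prodMk continuous_id)
    have hgc1 : Continuous fun r : ℝ => ‖fderiv ℝ φ (y, r)‖ :=
      hgc.comp (continuous_const.prodMk continuous_id)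
    set g' : ℝ → ℝ := fun r => fderiv ℝ φ (y, r) ((0 : EuclideanSpace ℝ (Fin n)), (1 : ℝ))
      with hg'
    have hg'c : Continuous g' :=
      (hfc.comp (continuous_const.prodMk continuous_id)).clm_apply continuous_const
    have e1 : ∫ s in Ioo (a - 1) a, φ (y, s) = ∫ u in (0:ℝ)..1, φ (y, u + (a - 1)) := by
      rw [intervalIntegral.integral_comp_add_right (fun s => φ (y, s)) (a - 1)]
      rw [show (0:ℝ) + (a - 1) = a - 1 by ring, show (1:ℝ) + (a - 1) = a by ring]
      rw [intervalIntegral.integral_of_le (by linarith), integral_Ioc_eq_integral_Ioo]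
    have e2 : ∫ t in Ioo b (b + 1), φ (y, t) = ∫ u in (0:ℝ)..1, φ (y, u + b) := by
      rw [intervalIntegral.integral_comp_add_right (fun s => φ (y, s)) b]
      rw [show (0:ℝ) + b = b by ring, show (1:ℝ) + b = b + 1 by ring]
      rw [intervalIntegral.integral_of_le (by linarith), integral_Ioc_eq_integral_Ioo]
    have ii1 : IntervalIntegrable (fun u : ℝ => φ (y, u + (a - 1))) volume 0 1 :=
      (hc1.comp (continuous_id.add continuous_const)).intervalIntegrable 0 1
    have ii2 : IntervalIntegrable (fun u : ℝ => φ (y, u + b)) volume 0 1 :=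
      (hc1.comp (continuous_id.add continuous_const)).intervalIntegrable 0 1
    rw [e1, e2, ← intervalIntegral.integral_sub ii1 ii2, ← Real.norm_eq_abs]
    have hb : ∀ u ∈ Set.uIoc (0:ℝ) 1, ‖φ (y, u + (a - 1)) - φ (y, u + b)‖ ≤ G y := by
      intro u hu
      rw [Set.uIoc_of_le (by norm_num : (0:ℝ) ≤ 1)] at hu
      set s := u + (a - 1) with hs
      set t := u + b with ht
      have hst : s ≤ t := by simp [hs, ht]; linarith
      have hderiv : ∀ r ∈ Set.uIcc s t, HasDerivAt (fun r => φ (y, r)) (g' r) r := by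
        intro r _
        have hd : HasFDerivAt φ (fderiv ℝ φ (y, r)) (y, r) :=
          (hφ.differentiable one_ne_zero (y, r)).hasFDerivAt
        have hcurve : HasDerivAt (fun r : ℝ => ((y : EuclideanSpace ℝ (Fin n)), r))
            ((0 : EuclideanSpace ℝ (Fin n)), (1 : ℝ)) r :=
          (hasDerivAt_const r y).prodMk (hasDerivAt_id r)
        exact hd.comp_hasDerivAt r hcurve
      have hint : IntervalIntegrable g' volume s t := hg'c.intervalIntegrable s t
      have ftc := intervalIntegral.integral_eq_sub_of_hasDerivAt hderiv hint
      have hbig : IntegrableOn (fun r => ‖fderiv ℝ φ (y, r)‖) (Ioo (a-1) (b+1)) volume :=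
        intOnR hgc1 _ _
      calc ‖φ (y, s) - φ (y, t)‖
          = ‖∫ r in s..t, g' r‖ := by rw [ftc, norm_sub_rev]
        _ ≤ ∫ r in s..t, ‖g' r‖ :=
            intervalIntegral.norm_integral_le_integral_norm hst
        _ = ∫ r in Ioo s t, ‖g' r‖ := by
            rw [intervalIntegral.integral_of_le hst, integral_Ioc_eq_integral_Ioo]
        _ ≤ ∫ r in Ioo s t, ‖fderiv ℝ φ (y, r)‖ := by
            refine setIntegral_mono_on (intOnR hg'c.norm _ _) (intOnR hgc1 _ _)
              measurableSet_Ioo ?_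
            intro r _
            calc ‖g' r‖ ≤ ‖fderiv ℝ φ (y, r)‖ * ‖((0 : EuclideanSpace ℝ (Fin n)), (1:ℝ))‖ :=
                  (fderiv ℝ φ (y, r)).le_opNorm _
              _ = ‖fderiv ℝ φ (y, r)‖ := by
                  simp [Prod.norm_def]
        _ ≤ G y := by
            refine setIntegral_mono_set hbig (Filter.Eventually.of_forall fun r => norm_nonneg _)
              (HasSubset.Subset.eventuallyLE ?_)
            exact Ioo_subset_Ioo (by simp [hs]; linarith [hu.1]) (by simp [ht]; linarith [hu.2])
      done
    have := intervalIntegral.norm_integral_le_of_norm_le_const hb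
    simpa using this
  -- assemble
  have hI1 : ∫ x in D ×ˢ Ioo (a - 1) a, φ x = ∫ y in D, ∫ s in Ioo (a - 1) a, φ (y, s) :=
    hprod _ _ φ hφc
  have hI2 : ∫ x in D ×ˢ Ioo b (b + 1), φ x = ∫ y in D, ∫ t in Ioo b (b + 1), φ (y, t) :=
    hprod _ _ φ hφc
  have hR : ∫ x in D ×ˢ Ioo (a - 1) (b + 1), ‖fderiv ℝ φ x‖ = ∫ y in D, G y :=
    hprod _ _ _ hgc
  have hdiff : |(∫ x in D ×ˢ Ioo (a - 1) a, φ x) - ∫ x in D ×ˢ Ioo b (b + 1), φ x|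
      ≤ ∫ y in D, G y := by
    rw [hI1, hI2, ← integral_sub (hinner _ _ φ hφc) (hinner _ _ φ hφc), ← Real.norm_eq_abs]
    exact norm_integral_le_of_norm_le
      (hinner (a - 1) (b + 1) (fun x => ‖fderiv ℝ φ x‖) hgc)
      (Filter.Eventually.of_forall fun y => key y)
  rw [hvol1, hvol2, div_sub_div_same, abs_div, abs_of_pos hVpos, inv_mul_eq_div, hR]
  exact (div_le_div_iff_of_pos_right hVpos).mpr hdiff
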